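/- Let P be an N×N real matrix with all entries nonnegative and every row sum at most 1. If every row of the matrix power P^N has sum strictly less than 1, then the powers P^k converge entrywise to the zero matrix as k → ∞; equivalently, every complex eigenvalue of P has modulus strictly less than 1. -/

import Mathlib

open Filter Topology

theorem stmt_7 (N : ℕ) (P : Matrix (Fin N) (Fin N) ℝ)
    (hP_nonneg : ∀ i j, 0 ≤ P i j)
    (hP_rows : ∀ i, ∑ j, P i j ≤ 1)
    (hproper : ∀ i, ∑ j, (P ^ N) i j < 1) :
    (∀ i j, Tendsto (fun k => (P ^ k) i j) atTop (𝓝 0)) ∧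
    (∀ μ : ℂ, (P.map (algebraMap ℝ ℂ)).charpoly.IsRoot μ → ‖μ‖ < 1) := by
  classical
  -- nonnegativity of entries of powers
  have hpow_nonneg : ∀ k i j, 0 ≤ (P ^ k) i j := by
    intro k
    induction k with
    | zero => intro i j; by_cases h : i = j <;> simp [Matrix.one_apply, h]
    | succ k ih =>
      intro i j
      rw [pow_succ, Matrix.mul_apply]
      exact Finset.sum_nonneg fun l _ => mul_nonneg (ih i l) (hP_nonneg l j)
  -- row-sum splitting
  have hsplit : ∀ a b i, ∑ j, (P ^ (a + b)) i j = ∑ l, (P ^ a) i l * ∑ j, (P ^ b) l j := by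
    intro a b i
    rw [pow_add]
    simp_rw [Matrix.mul_apply]
    rw [Finset.sum_comm]
    simp_rw [← Finset.mul_sum]
  -- row sums of powers are at most 1
  have hrow : ∀ k i, ∑ j, (P ^ k) i j ≤ 1 := by
    intro k
    induction k with
    | zero => intro i; simp [Matrix.one_apply]
    | succ k ih =>
      intro i
      have h1 : (1 : ℕ) + k = k + 1 := by ring
      calc ∑ j, (P ^ (k + 1)) i j = ∑ l, (P ^ 1) i l * ∑ j, (P ^ k) l j := by
            rw [← hsplit 1 k i, h1]
        _ ≤ ∑ l, (P ^ 1) i l * 1 := Finset.sum_le_sum fun l _ =>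
            mul_le_mul_of_nonneg_left (ih l) (hpow_nonneg 1 i l)
        _ ≤ 1 := by simpa using hP_rows i
  -- part 1
  have h1 : ∀ i j, Tendsto (fun k => (P ^ k) i j) atTop (𝓝 0) := by
    rcases Nat.eq_zero_or_pos N with h0 | hN
    · subst h0; intro i; exact i.elim0
    · have hne : Nonempty (Fin N) := ⟨⟨0, hN⟩⟩
      set c : ℝ := Finset.univ.sup' Finset.univ_nonempty (fun i => ∑ j, (P ^ N) i j) with hc
      have hc1 : c < 1 := (Finset.sup'_lt_iff _).mpr fun i _ => hproper i
      obtain ⟨i0⟩ := hne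
      have hcle : ∀ l, ∑ j, (P ^ N) l j ≤ c := fun l =>
        Finset.le_sup' (fun i => ∑ j, (P ^ N) i j) (Finset.mem_univ l)
      have hc0 : 0 ≤ c :=
        le_trans (Finset.sum_nonneg fun j _ => hpow_nonneg N i0 j) (hcle i0)
      -- row sums of P^(m*N) are ≤ c^m
      have hgeom : ∀ m i, ∑ j, (P ^ (m * N)) i j ≤ c ^ m := by
        intro m
        induction m with
        | zero => intro i; simpa using hrow 0 i
        | succ m ih =>
          intro i
          have : (m + 1) * N = m * N + N := by ring
          rw [this, hsplit]
          calc ∑ l, (P ^ (m * N)) i l * ∑ j, (P ^ N) l j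
              ≤ ∑ l, (P ^ (m * N)) i l * c := Finset.sum_le_sum fun l _ =>
                mul_le_mul_of_nonneg_left (hcle l) (hpow_nonneg _ i l)
            _ = (∑ l, (P ^ (m * N)) i l) * c := by rw [Finset.sum_mul]
            _ ≤ c ^ m * c := mul_le_mul_of_nonneg_right (ih i) hc0
            _ = c ^ (m + 1) := by ring
      have hentry : ∀ k i j, (P ^ k) i j ≤ c ^ (k / N) := by
        intro k i j
        have hk : k = (k / N) * N + k % N := by rw [mul_comm]; exact (Nat.div_add_mod k N).symm
        calc (P ^ k) i j ≤ ∑ j', (P ^ k) i j' :=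
              Finset.single_le_sum (fun j' _ => hpow_nonneg k i j') (Finset.mem_univ j)
          _ = ∑ l, (P ^ ((k / N) * N)) i l * ∑ j', (P ^ (k % N)) l j' := by
              rw [← hsplit, ← hk]
          _ ≤ ∑ l, (P ^ ((k / N) * N)) i l * 1 := Finset.sum_le_sum fun l _ =>
              mul_le_mul_of_nonneg_left (hrow _ l) (hpow_nonneg _ i l)
          _ ≤ c ^ (k / N) := by simpa using hgeom (k / N) i
      have hdivtop : Tendsto (fun k : ℕ => k / N) atTop atTop :=
        tendsto_atTop_atTop.mpr fun b => ⟨b * N, fun a ha => (Nat.le_div_iff_mul_le hN).mpr ha⟩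
      have htend : Tendsto (fun k : ℕ => c ^ (k / N)) atTop (𝓝 0) :=
        (tendsto_pow_atTop_nhds_zero_of_lt_one hc0 hc1).comp hdivtop
      intro i j
      exact squeeze_zero (fun k => hpow_nonneg k i j) (fun k => hentry k i j) htend
  refine ⟨h1, ?_⟩
  -- part 2
  intro μ hμ
  set M : Matrix (Fin N) (Fin N) ℂ := P.map (algebraMap ℝ ℂ) with hM
  have hdet : (μ • (1 : Matrix (Fin N) (Fin N) ℂ) - M).det = 0 := by
    have h := hμ
    rw [Polynomial.IsRoot, Matrix.charpoly, ← Polynomial.coe_evalRingHom,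
      RingHom.map_det] at h
    rw [show μ • (1 : Matrix (Fin N) (Fin N) ℂ) - M
        = (Polynomial.evalRingHom μ).mapMatrix (Matrix.charmatrix M) from ?_]
    · exact h
    · ext i j
      rw [RingHom.mapMatrix_apply, Matrix.map_apply]
      by_cases hij : i = j
      · subst hij
        simp [Matrix.charmatrix_apply_eq, Matrix.one_apply]
      · simp [Matrix.charmatrix_apply_ne _ _ _ hij, Matrix.one_apply_ne hij, hij]
  obtain ⟨v, hv, hMv⟩ := Matrix.exists_mulVec_eq_zero_iff.mpr hdet
  have hvec : M.mulVec v = μ • v := by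
    rw [Matrix.sub_mulVec, sub_eq_zero] at hMv
    rw [← hMv, Matrix.smul_mulVec, Matrix.one_mulVec]
  have hk : ∀ k, (M ^ k).mulVec v = μ ^ k • v := by
    intro k
    induction k with
    | zero => simp
    | succ k ih =>
      rw [pow_succ', ← Matrix.mulVec_mulVec, ih, Matrix.mulVec_smul, hvec,
        smul_smul, pow_succ, mul_comm]
  have hMk : ∀ k, M ^ k = (P ^ k).map (algebraMap ℝ ℂ) := by
    intro k
    simp only [hM, ← RingHom.mapMatrix_apply, ← map_pow]
  obtain ⟨j, hj⟩ := Function.ne_iff.mp hv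
  by_contra habs
  push_neg at habs
  have hbound : ∀ k, ‖v j‖ ≤ ∑ i, (P ^ k) j i * ‖v i‖ := by
    intro k
    have he : ‖((M ^ k).mulVec v) j‖ = ‖μ‖ ^ k * ‖v j‖ := by
      rw [hk]
      simp [map_pow]
    have h2 : ‖((M ^ k).mulVec v) j‖ ≤ ∑ i, (P ^ k) j i * ‖v i‖ := by
      rw [hMk]
      calc ‖∑ i, ((P ^ k).map (algebraMap ℝ ℂ)) j i * v i‖ ≤
            ∑ i, ‖((P ^ k).map (algebraMap ℝ ℂ)) j i * v i‖ :=
            norm_sum_le _ _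
        _ = ∑ i, (P ^ k) j i * ‖v i‖ := by
            refine Finset.sum_congr rfl fun i _ => ?_
            rw [norm_mul, Matrix.map_apply]
            simp [Complex.norm_real, abs_of_nonneg (hpow_nonneg k j i)]
    have h3 : ‖v j‖ ≤ ‖μ‖ ^ k * ‖v j‖ :=
      le_mul_of_one_le_left (norm_nonneg _) (one_le_pow₀ habs)
    calc ‖v j‖ ≤ ‖μ‖ ^ k * ‖v j‖ := h3
      _ = ‖((M ^ k).mulVec v) j‖ := he.symm
      _ ≤ _ := h2
  have htend0 : Tendsto (fun k => ∑ i, (P ^ k) j i * ‖v i‖) atTop (𝓝 0) := by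
    have := tendsto_finset_sum Finset.univ fun i (_ : i ∈ Finset.univ) =>
      (h1 j i).mul_const (‖v i‖)
    simpa using this
  have hle : ‖v j‖ ≤ 0 := ge_of_tendsto' htend0 hbound
  exact absurd hle (not_le.mpr (norm_pos_iff.mpr hj))
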